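/- arXiv:2601.14206 — 2 statements merged into one kernel-verified Lean document; each statement's English description precedes it below -/
import Mathlib

section
/- Let G be a finite simple graph on N vertices in which every vertex has degree at most Δ. Let c ≥ 1, d₁ ≥ 1 be integers and d₂ ≥ 0 an integer, and let 𝒴 be a family of nonempty subsets of V such that every Y ∈ 𝒴 satisfies |Y| = c and diam(Y) ≤ d₁, and for every vertex i there exists Y ∈ 𝒴 containing a vertex within distance d₂ of i. Set Q† = ∑_{Y∈𝒴} ∏_{j∈Y} s†_j, |Q^p⟩ = (Q†)^p |0̄⟩, and |Q⟩ = |Q^1⟩. Let R_max be a positive integer and for each nonempty X ⊆ V with diam(X) ≤ R_max let h_X be an operator supported on X with h_X |0̄⟩ = 0 and h_X |Q⟩ = 0. If p is a natural number with p·(Δ^{2(d₁−1)+2d₂+R_max}+1) ≤ N and (∑_X h_X) |Q^p⟩ = E'·|Q^p⟩ for some E' ∈ ℂ, then E' = 0. -/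
open scoped BigOperators
set_option linter.unusedSectionVars false

noncomputable section

/-- The state space of a collection of qubits indexed by `V`: the complex vector space of
functions from configurations `V → Bool` to `ℂ`. -/
abbrev QState (V : Type*) := (V → Bool) → ℂ

section Defs

variable {V : Type*} [Fintype V] [DecidableEq V]

/-- The standard basis vector associated to the configuration `f`. -/
def basisVec (f : V → Bool) : QState V := fun g => if g = f then 1 else 0

/-- The creation operator `s†_i` at site `i`. -/
def creOp (i : V) : Module.End ℂ (QState V) where
  toFun ψ := fun g => if g i = true then ψ (Function.update g i false) else 0
  map_add' ψ φ := by funext g; by_cases h : g i = true <;> simp [h]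
  map_smul' a ψ := by funext g; by_cases h : g i = true <;> simp [h]

/-- The annihilation operator `s_i` at site `i`. -/
def annOp (i : V) : Module.End ℂ (QState V) where
  toFun ψ := fun g => if g i = false then ψ (Function.update g i true) else 0
  map_add' ψ φ := by funext g; by_cases h : g i = false <;> simp [h]
  map_smul' a ψ := by funext g; by_cases h : g i = false <;> simp [h]

@[simp] lemma creOp_apply (i : V) (ψ : QState V) (g : V → Bool) :
    creOp i ψ g = if g i = true then ψ (Function.update g i false) else 0 := rfl

variable (V)

/-- The vacuum `|0̄⟩`: the basis vector of the all-false configuration. -/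
def vac : QState V := basisVec (fun _ => false)

/-- The total raising operator `S† = ∑ i, s†_i`. -/
def Sdag : Module.End ℂ (QState V) := ∑ i : V, creOp i

/-- The number operator `N̂ = ∑ i, s†_i s_i`. -/
def numOp : Module.End ℂ (QState V) := ∑ i : V, creOp i * annOp i

/-- The unnormalized Dicke state `|W^p⟩ = (S†)^p |0̄⟩`. -/
def WState (p : ℕ) : QState V := ((Sdag V) ^ p) (vac V)

variable {V}

/-- Creation operators at different sites commute. -/
lemma creOp_commute (i j : V) : Commute (creOp (V := V) i) (creOp j) := by
  rcases eq_or_ne i j with rfl | hij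
  · exact Commute.refl _
  · show creOp i * creOp j = creOp j * creOp i
    refine LinearMap.ext fun ψ => funext fun g => ?_
    simp only [Module.End.mul_apply, creOp_apply]
    by_cases hi : g i = true <;> by_cases hj : g j = true <;>
      simp [hi, hj, Function.update_of_ne hij, Function.update_of_ne hij.symm,
        Function.update_comm hij]

/-- The product `∏_{j ∈ Y} s†_j` of creation operators over a finite set `Y` of sites
(the operators commute, so the product is well defined; the empty product is the identity). -/
def creProd (Y : Finset V) : Module.End ℂ (QState V) :=
  Y.noncommProd creOp fun a _ b _ _ => creOp_commute a b

/-- The operator `O` is supported on the set of sites `X`. -/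
def SupportedOn (O : Module.End ℂ (QState V)) (X : Set V) : Prop :=
  (∀ f g : V → Bool, (∃ i ∉ X, f i ≠ g i) → O (basisVec f) g = 0) ∧
  (∀ f f' g g' : V → Bool,
    (∀ i ∈ X, f i = f' i) → (∀ i ∈ X, g i = g' i) →
    (∀ i ∉ X, f i = g i) → (∀ i ∉ X, f' i = g' i) →
    O (basisVec f) g = O (basisVec f') g')

/-- An operator is `k`-local if it is a finite sum of operators each supported
on a subset of at most `k` sites. -/
def IsKLocal (k : ℕ) (O : Module.End ℂ (QState V)) : Prop :=
  ∃ (n : ℕ) (h : Fin n → Module.End ℂ (QState V)) (X : Fin n → Finset V),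
    (∀ t, SupportedOn (h t) ↑(X t)) ∧ (∀ t, (X t).card ≤ k) ∧ O = ∑ t, h t

/-- Vertices `i` and `j` are within distance `r` in the graph `G`:
they are joined by a walk of length at most `r`. -/
def WithinDist (G : SimpleGraph V) (r : ℕ) (i j : V) : Prop :=
  ∃ w : G.Walk i j, w.length ≤ r

/-- The ball of radius `r` around vertex `i` in the graph `G`. -/
def gball (G : SimpleGraph V) (i : V) (r : ℕ) : Set V := {j | WithinDist G r i j}

/-- `diam(X) ≤ R` with respect to `G`: every two vertices of `X` are within distance `R - 1`. -/
def GDiamLE (G : SimpleGraph V) (X : Finset V) (R : ℕ) : Prop :=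
  ∀ i ∈ X, ∀ j ∈ X, WithinDist G (R - 1) i j

/-- `H` is a Hamiltonian of range `R` with respect to the graph `G`: a finite sum over
nonempty subsets `X` with `diam(X) ≤ R` of operators supported on `X`. -/
def IsRangeHam (G : SimpleGraph V) (R : ℕ) (H : Module.End ℂ (QState V)) : Prop :=
  ∃ h : Finset V → Module.End ℂ (QState V),
    (∀ X, SupportedOn (h X) ↑X) ∧
    (∀ X, h X ≠ 0 → X.Nonempty ∧ GDiamLE G X R) ∧
    H = ∑ X : Finset V, h X

/-- `H` is a `k`-local Hamiltonian of range `R` with respect to the graph `G`. -/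
def IsKLocalRangeHam (G : SimpleGraph V) (k R : ℕ) (H : Module.End ℂ (QState V)) : Prop :=
  ∃ h : Finset V → Module.End ℂ (QState V),
    (∀ X, SupportedOn (h X) ↑X) ∧
    (∀ X, h X ≠ 0 → X.Nonempty ∧ GDiamLE G X R ∧ X.card ≤ k) ∧
    H = ∑ X : Finset V, h X

/-- An invertible linear operator `M` is `δ`-locality-preserving with respect to `G` if
conjugation by `M` or `M⁻¹` increases the range of any operator by at most `δ`. -/
def LocalityPreserving (G : SimpleGraph V) (δ : ℕ) (M : QState V ≃ₗ[ℂ] QState V) : Prop :=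
  ∀ R : ℕ, 0 < R → ∀ O : Module.End ℂ (QState V), IsRangeHam G R O →
    IsRangeHam G (R + δ) (M.toLinearMap ∘ₗ O ∘ₗ M.symm.toLinearMap) ∧
    IsRangeHam G (R + δ) (M.symm.toLinearMap ∘ₗ O ∘ₗ M.toLinearMap)

end Defs

section Chain

/-- Distance between two sites of the open chain `{0, …, N-1}`. -/
def chainDist {N : ℕ} (i j : Fin N) : ℕ := ((i : ℤ) - (j : ℤ)).natAbs

/-- `diam(X) ≤ R` on the open chain: `diam(X) = 1 + max |i - j|`. -/
def ChainDiamLE {N : ℕ} (X : Finset (Fin N)) (R : ℕ) : Prop :=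
  ∀ i ∈ X, ∀ j ∈ X, chainDist i j + 1 ≤ R

/-- `H` is a Hamiltonian of range `R` on the open chain of `N` sites. -/
def IsChainRangeHam {N : ℕ} (R : ℕ) (H : Module.End ℂ (QState (Fin N))) : Prop :=
  ∃ h : Finset (Fin N) → Module.End ℂ (QState (Fin N)),
    (∀ X, SupportedOn (h X) ↑X) ∧
    (∀ X, h X ≠ 0 → X.Nonempty ∧ ChainDiamLE X R) ∧
    H = ∑ X : Finset (Fin N), h X

/-- `H` is a `k`-local Hamiltonian of range `R` on the open chain of `N` sites. -/
def IsChainKLocalRangeHam {N : ℕ} (k R : ℕ) (H : Module.End ℂ (QState (Fin N))) : Prop :=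
  ∃ h : Finset (Fin N) → Module.End ℂ (QState (Fin N)),
    (∀ X, SupportedOn (h X) ↑X) ∧
    (∀ X, h X ≠ 0 → X.Nonempty ∧ ChainDiamLE X R ∧ X.card ≤ k) ∧
    H = ∑ X : Finset (Fin N), h X

end Chain

end
noncomputable section Aux13

section AuxGeom

variable {V : Type*} [Fintype V] [DecidableEq V] {G : SimpleGraph V}

noncomputable local instance (y : V) : Fintype (G.neighborSet y) := Fintype.ofFinite _

lemma withinDist_refl (r : ℕ) (i : V) : WithinDist G r i i :=
  ⟨.nil, by simp⟩

lemma WithinDist.symm' {r : ℕ} {i j : V} (h : WithinDist G r i j) : WithinDist G r j i := by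
  obtain ⟨w, hw⟩ := h
  exact ⟨w.reverse, by simpa using hw⟩

lemma WithinDist.mono' {r s : ℕ} (hrs : r ≤ s) {i j : V} (h : WithinDist G r i j) :
    WithinDist G s i j := by
  obtain ⟨w, hw⟩ := h; exact ⟨w, hw.trans hrs⟩

lemma WithinDist.trans' {r s : ℕ} {i j k : V} (h : WithinDist G r i j)
    (h' : WithinDist G s j k) : WithinDist G (r + s) i k := by
  obtain ⟨w, hw⟩ := h; obtain ⟨w', hw'⟩ := h'
  refine ⟨w.append w', ?_⟩
  rw [SimpleGraph.Walk.length_append]; omega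

lemma withinDist_zero {i j : V} (h : WithinDist G 0 i j) : i = j := by
  obtain ⟨w, hw⟩ := h
  exact SimpleGraph.Walk.eq_of_length_eq_zero (Nat.le_zero.mp hw)

lemma WithinDist.adj_extend {r : ℕ} {i j k : V} (h : WithinDist G r i j) (hjk : G.Adj j k) :
    WithinDist G (r + 1) i k := by
  obtain ⟨w, hw⟩ := h
  refine ⟨w.concat hjk, ?_⟩
  rw [SimpleGraph.Walk.length_concat]; omega

lemma withinDist_succ {r : ℕ} {i j : V} (h : WithinDist G (r + 1) i j) :
    WithinDist G r i j ∨ ∃ y, WithinDist G r i y ∧ G.Adj y j := by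
  obtain ⟨w, hw⟩ := h
  cases hrev : w.reverse with
  | nil => exact Or.inl (withinDist_refl r i)
  | cons hadj w2 =>
    right
    refine ⟨_, ⟨w2.reverse, ?_⟩, hadj.symm⟩
    have hl : w.reverse.length = w2.length + 1 := by rw [hrev]; simp
    rw [SimpleGraph.Walk.length_reverse] at hl
    rw [SimpleGraph.Walk.length_reverse]
    omega

variable (G) in
/-- The ball of radius `r` around `v`, as a `Finset`. -/
def ballF (v : V) (r : ℕ) : Finset V :=
  @Finset.filter _ (fun u => WithinDist G r v u) (Classical.decPred _) Finset.univ

lemma mem_ballF {v u : V} {r : ℕ} : u ∈ ballF G v r ↔ WithinDist G r v u := by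
  classical
  simp [ballF]

lemma ballF_zero (v : V) : ballF G v 0 = {v} := by
  ext u
  simp only [mem_ballF, Finset.mem_singleton]
  constructor
  · exact fun h => (withinDist_zero h).symm
  · rintro rfl; exact withinDist_refl _ _

lemma ballF_mono {v : V} {r s : ℕ} (h : r ≤ s) : ballF G v r ⊆ ballF G v s := by
  intro u hu; rw [mem_ballF] at *; exact hu.mono' h

lemma degree_le {Δ : ℕ} (hdeg : ∀ w : V, (G.neighborSet w).ncard ≤ Δ) (y : V) :
    (G.neighborFinset y).card ≤ Δ := by
  have := hdeg y
  rwa [Set.ncard_eq_toFinset_card'] at this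

lemma sphere_one_le {Δ : ℕ} (hdeg : ∀ w : V, (G.neighborSet w).ncard ≤ Δ) (v : V) :
    (ballF G v 1 \ ballF G v 0).card ≤ Δ := by
  have hsub : ballF G v 1 \ ballF G v 0 ⊆ G.neighborFinset v := by
    intro u hu
    rw [Finset.mem_sdiff, mem_ballF, mem_ballF] at hu
    obtain ⟨h1, h0⟩ := hu
    rcases withinDist_succ h1 with h | ⟨y, hy, hadj⟩
    · exact absurd h h0
    · have : y = v := (withinDist_zero hy).symm
      subst this
      rwa [SimpleGraph.mem_neighborFinset]
  exact le_trans (Finset.card_le_card hsub) (degree_le hdeg v)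

lemma sphere_step_le {Δ : ℕ} (hdeg : ∀ w : V, (G.neighborSet w).ncard ≤ Δ) (v : V) (t : ℕ) :
    (ballF G v (t + 2) \ ballF G v (t + 1)).card ≤
      (Δ - 1) * (ballF G v (t + 1) \ ballF G v t).card := by
  classical
  set A := ballF G v (t + 2) \ ballF G v (t + 1) with hA
  set B := ballF G v (t + 1) \ ballF G v t with hB
  have hsub : A ⊆ B.biUnion (fun y => G.neighborFinset y ∩ A) := by
    intro u hu
    have hu' := hu
    rw [hA, Finset.mem_sdiff, mem_ballF, mem_ballF] at hu'
    obtain ⟨h2, h1⟩ := hu'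
    rcases withinDist_succ h2 with h | ⟨y, hy, hadj⟩
    · exact absurd h h1
    · refine Finset.mem_biUnion.mpr ⟨y, ?_, ?_⟩
      · rw [hB, Finset.mem_sdiff, mem_ballF, mem_ballF]
        refine ⟨hy, fun hyt => h1 (hyt.adj_extend hadj)⟩
      · rw [Finset.mem_inter, SimpleGraph.mem_neighborFinset]
        exact ⟨hadj, hu⟩
  calc A.card ≤ (B.biUnion (fun y => G.neighborFinset y ∩ A)).card := Finset.card_le_card hsub
    _ ≤ ∑ y ∈ B, (G.neighborFinset y ∩ A).card := Finset.card_biUnion_le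
    _ ≤ ∑ _y ∈ B, (Δ - 1) := by
        refine Finset.sum_le_sum fun y hyB => ?_
        rw [hB, Finset.mem_sdiff, mem_ballF, mem_ballF] at hyB
        obtain ⟨hy1, hyt⟩ := hyB
        rcases withinDist_succ hy1 with h | ⟨z, hz, hadj⟩
        · exact absurd h hyt
        · have hzmem : z ∈ G.neighborFinset y := by
            rw [SimpleGraph.mem_neighborFinset]; exact hadj.symm
          have hzA : z ∉ A := by
            rw [hA, Finset.mem_sdiff, mem_ballF, mem_ballF]
            intro hc
            exact hc.2 (hz.mono' (Nat.le_succ t))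
          have hsub2 : G.neighborFinset y ∩ A ⊆ (G.neighborFinset y).erase z := by
            intro x hx
            rw [Finset.mem_inter] at hx
            refine Finset.mem_erase.mpr ⟨?_, hx.1⟩
            rintro rfl; exact hzA hx.2
          calc (G.neighborFinset y ∩ A).card ≤ ((G.neighborFinset y).erase z).card :=
                Finset.card_le_card hsub2
            _ = (G.neighborFinset y).card - 1 := Finset.card_erase_of_mem hzmem
            _ ≤ Δ - 1 := Nat.sub_le_sub_right (degree_le hdeg y) 1
    _ = (Δ - 1) * B.card := by rw [Finset.sum_const, smul_eq_mul, mul_comm]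

lemma geom_sum_le (Δ r : ℕ) : ∑ t ∈ Finset.range r, Δ * (Δ - 1) ^ t ≤ Δ ^ r := by
  rcases Nat.eq_zero_or_pos Δ with rfl | hΔ
  · simp
  induction r with
  | zero => simp
  | succ s ih =>
    rcases Nat.eq_zero_or_pos s with rfl | _hs
    · simp
    rw [Finset.sum_range_succ]
    have h1 : Δ * (Δ - 1) ^ s ≤ (Δ - 1) * Δ ^ s := by
      obtain ⟨s', rfl⟩ := Nat.exists_eq_succ_of_ne_zero _hs.ne'
      calc Δ * (Δ - 1) ^ (s' + 1) = (Δ - 1) * (Δ * (Δ - 1) ^ s') := by ring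
        _ ≤ (Δ - 1) * (Δ * Δ ^ s') := by
            exact Nat.mul_le_mul_left _ (Nat.mul_le_mul_left _
              (Nat.pow_le_pow_left (Nat.sub_le Δ 1) s'))
        _ = (Δ - 1) * Δ ^ (s' + 1) := by ring
    calc ∑ t ∈ Finset.range s, Δ * (Δ - 1) ^ t + Δ * (Δ - 1) ^ s
        ≤ Δ ^ s + (Δ - 1) * Δ ^ s := Nat.add_le_add ih h1
      _ = (1 + (Δ - 1)) * Δ ^ s := by ring
      _ = Δ * Δ ^ s := by congr 1; omega
      _ = Δ ^ (s + 1) := by ring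

lemma card_ballF_le {Δ : ℕ} (hdeg : ∀ w : V, (G.neighborSet w).ncard ≤ Δ) (v : V) (r : ℕ) :
    (ballF G v r).card ≤ Δ ^ r + 1 := by
  have hsph : ∀ t : ℕ, (ballF G v (t + 1) \ ballF G v t).card ≤ Δ * (Δ - 1) ^ t := by
    intro t
    induction t with
    | zero => simpa using sphere_one_le hdeg v
    | succ s ih =>
      calc (ballF G v (s + 2) \ ballF G v (s + 1)).card
          ≤ (Δ - 1) * (ballF G v (s + 1) \ ballF G v s).card := sphere_step_le hdeg v s
        _ ≤ (Δ - 1) * (Δ * (Δ - 1) ^ s) := Nat.mul_le_mul_left _ ih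
        _ = Δ * (Δ - 1) ^ (s + 1) := by ring
  have hball : ∀ r : ℕ, (ballF G v r).card ≤ 1 + ∑ t ∈ Finset.range r, Δ * (Δ - 1) ^ t := by
    intro r
    induction r with
    | zero => rw [ballF_zero]; simp
    | succ s ih =>
      have hcard := Finset.card_sdiff_add_card_eq_card
        (ballF_mono (G := G) (v := v) (Nat.le_succ s))
      rw [Finset.sum_range_succ]
      simp only [Nat.succ_eq_add_one] at *
      have := hsph s
      omega
  calc (ballF G v r).card ≤ 1 + ∑ t ∈ Finset.range r, Δ * (Δ - 1) ^ t := hball r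
    _ ≤ 1 + Δ ^ r := by have := geom_sum_le Δ r; omega
    _ = Δ ^ r + 1 := by ring

lemma exists_separated {Δ : ℕ} (hdeg : ∀ w : V, (G.neighborSet w).ncard ≤ Δ) (E : ℕ) :
    ∀ (n : ℕ) (S : Finset V), n * (Δ ^ E + 1) ≤ S.card →
    ∃ f : Fin n → V, (∀ k, f k ∈ S) ∧ ∀ k l, k ≠ l → ¬ WithinDist G E (f k) (f l) := by
  intro n
  induction n with
  | zero => exact fun S _ => ⟨Fin.elim0, fun k => k.elim0, fun k => k.elim0⟩
  | succ n ih =>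
    intro S hS
    have hpos : 0 < S.card := by
      have : 1 * (Δ ^ E + 1) ≤ (n + 1) * (Δ ^ E + 1) :=
        Nat.mul_le_mul_right _ (by omega)
      omega
    obtain ⟨v, hv⟩ := Finset.card_pos.mp hpos
    set S' := S \ ballF G v E with hS'
    have hcard' : n * (Δ ^ E + 1) ≤ S'.card := by
      have h1 : S.card - (ballF G v E).card ≤ S'.card := Finset.le_card_sdiff _ _
      have h2 := card_ballF_le hdeg v E
      have h3 : (n + 1) * (Δ ^ E + 1) = n * (Δ ^ E + 1) + (Δ ^ E + 1) := by ring
      omega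
    obtain ⟨f', hf'S, hf'sep⟩ := ih S' hcard'
    have hf'notball : ∀ k, ¬ WithinDist G E v (f' k) := by
      intro k hk
      have := hf'S k
      rw [hS', Finset.mem_sdiff] at this
      exact this.2 (mem_ballF.mpr hk)
    refine ⟨Fin.cases v f', ?_, ?_⟩
    · intro k
      induction k using Fin.cases with
      | zero => simpa using hv
      | succ k =>
        simp only [Fin.cases_succ]
        have := hf'S k
        rw [hS', Finset.mem_sdiff] at this
        exact this.1
    · intro k l hkl
      induction k using Fin.cases with
      | zero =>
        induction l using Fin.cases with
        | zero => exact absurd rfl hkl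
        | succ l => simpa using hf'notball l
      | succ k =>
        induction l using Fin.cases with
        | zero =>
          simp only [Fin.cases_succ, Fin.cases_zero]
          exact fun h => hf'notball k h.symm'
        | succ l =>
          simp only [Fin.cases_succ]
          exact hf'sep k l (fun h => hkl (by rw [h]))

end AuxGeom

end Aux13
noncomputable section Aux13b

section AuxOp

variable {V : Type*} [Fintype V] [DecidableEq V]

lemma basis_expand (ψ : QState V) : ψ = ∑ f : V → Bool, ψ f • basisVec f := by
  funext g
  rw [Finset.sum_apply]
  have hterm : ∀ f : V → Bool, (ψ f • basisVec f) g = if g = f then ψ f else 0 := by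
    intro f
    by_cases h : g = f <;> simp [basisVec, h]
  rw [Finset.sum_congr rfl fun f _ => hterm f]
  rw [Finset.sum_ite_eq Finset.univ g ψ]
  simp

lemma end_ext {A B : Module.End ℂ (QState V)}
    (h : ∀ f, A (basisVec f) = B (basisVec f)) : A = B := by
  apply LinearMap.ext
  intro ψ
  rw [basis_expand ψ, map_sum, map_sum]
  exact Finset.sum_congr rfl fun f _ => by rw [map_smul, map_smul, h f]

lemma apply_eq_sum (A : Module.End ℂ (QState V)) (ψ : QState V) (g : V → Bool) :
    A ψ g = ∑ f : V → Bool, ψ f * A (basisVec f) g := by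
  conv_lhs => rw [basis_expand ψ]
  rw [map_sum, Finset.sum_apply]
  exact Finset.sum_congr rfl fun f _ => by rw [map_smul]; simp

/-- Set all the sites of `Y` to `false` in the configuration `g`. -/
def setF (g : V → Bool) (Y : Finset V) : V → Bool := fun i => if i ∈ Y then false else g i

lemma creProd_apply' (Y : Finset V) (ψ : QState V) :
    ∀ g, creProd Y ψ g = if ∀ i ∈ Y, g i = true then ψ (setF g Y) else 0 := by
  induction Y using Finset.induction_on with
  | empty =>
    intro g
    have h1 : setF g ∅ = g := by funext i; simp [setF]
    have h2 : creProd (V := V) ∅ = 1 := Finset.noncommProd_empty _ _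
    rw [h2]
    simp [h1]
  | @insert a Y ha ih =>
    intro g
    have hins : creProd (insert a Y) = creOp a * creProd (V := V) Y := by
      unfold creProd
      exact Finset.noncommProd_insert_of_notMem _ _ _ _ ha
    rw [hins, Module.End.mul_apply, creOp_apply]
    by_cases hcond : ∀ i ∈ insert a Y, g i = true
    · have hga : g a = true := hcond a (Finset.mem_insert_self a Y)
      rw [if_pos hga, ih]
      have hcond2 : ∀ i ∈ Y, Function.update g a false i = true := by
        intro i hi
        have hia : i ≠ a := by rintro rfl; exact ha hi
        rw [Function.update_of_ne hia]
        exact hcond i (Finset.mem_insert_of_mem hi)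
      rw [if_pos hcond2, if_pos hcond]
      congr 1
      funext i
      by_cases hiY : i ∈ Y
      · simp [setF, hiY, Finset.mem_insert, Or.inr hiY]
      · by_cases hia : i = a
        · subst hia
          simp [setF, hiY, Function.update_self]
        · simp [setF, hiY, hia, Function.update_of_ne hia, Finset.mem_insert]
    · rw [if_neg hcond]
      by_cases hga : g a = true
      · rw [if_pos hga, ih]
        rw [if_neg]
        intro hc
        apply hcond
        intro i hi
        rcases Finset.mem_insert.mp hi with rfl | hiY
        · exact hga
        · have hia : i ≠ a := by rintro rfl; exact ha hiY
          have := hc i hiY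
          rwa [Function.update_of_ne hia] at this
      · rw [if_neg hga]

lemma creOp_basisVec (j : V) (h : V → Bool) :
    creOp j (basisVec h) =
      if h j = true then 0 else basisVec (Function.update h j true) := by
  by_cases hj : h j = true
  · rw [if_pos hj]
    funext g
    show (if g j = true then basisVec h (Function.update g j false) else 0) = 0
    by_cases hg : g j = true
    · rw [if_pos hg]
      unfold basisVec
      rw [if_neg]
      intro hc
      have h1 := congrFun hc j
      rw [Function.update_self, hj] at h1
      exact Bool.false_ne_true h1
    · rw [if_neg hg]
  · rw [if_neg hj]
    rw [Bool.not_eq_true] at hj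
    funext g
    show (if g j = true then basisVec h (Function.update g j false) else 0) =
      basisVec (Function.update h j true) g
    by_cases hg : g j = true
    · rw [if_pos hg]
      unfold basisVec
      have hiff : (Function.update g j false = h) ↔ (g = Function.update h j true) := by
        constructor
        · intro hc
          funext i
          by_cases hi : i = j
          · subst hi; rw [Function.update_self, hg]
          · rw [Function.update_of_ne hi]
            have := congrFun hc i
            rw [Function.update_of_ne hi] at this
            rw [this]
        · intro hc
          funext i
          by_cases hi : i = j
          · subst hi; rw [Function.update_self, hj]
          · rw [Function.update_of_ne hi]
            have := congrFun hc i
            rw [Function.update_of_ne hi] at this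
            rw [this]
      exact if_congr hiff rfl rfl
    · rw [if_neg hg]
      unfold basisVec
      rw [if_neg]
      intro hc
      have h1 := congrFun hc j
      rw [Function.update_self] at h1
      exact hg h1

lemma supportedOn_commute_creOp {O : Module.End ℂ (QState V)} {X : Finset V}
    (hO : SupportedOn O (X : Set V)) {j : V} (hj : j ∉ X) :
    Commute O (creOp j) := by
  have hj' : j ∉ (X : Set V) := by simpa using hj
  apply end_ext
  intro f
  rw [Module.End.mul_apply, Module.End.mul_apply, creOp_basisVec]
  by_cases hfj : f j = true
  · rw [if_pos hfj, map_zero]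
    funext g
    show (0 : QState V) g = creOp j (O (basisVec f)) g
    rw [creOp_apply, Pi.zero_apply]
    by_cases hg : g j = true
    · rw [if_pos hg]
      exact (hO.1 f _ ⟨j, hj', by simp [Function.update_self, hfj]⟩).symm
    · rw [if_neg hg]
  · rw [if_neg hfj]
    rw [Bool.not_eq_true] at hfj
    funext g
    rw [creOp_apply]
    by_cases hg : g j = true
    · rw [if_pos hg]
      by_cases hagree : ∀ i, i ∉ (X : Set V) → Function.update f j true i = g i
      · apply hO.2 (Function.update f j true) f g (Function.update g j false)
        · intro i hiX
          have hij : i ≠ j := by rintro rfl; exact hj' hiX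
          rw [Function.update_of_ne hij]
        · intro i hiX
          have hij : i ≠ j := by rintro rfl; exact hj' hiX
          rw [Function.update_of_ne hij]
        · exact hagree
        · intro i hiX
          by_cases hij : i = j
          · subst hij; rw [Function.update_self, hfj]
          · have := hagree i hiX
            rw [Function.update_of_ne hij] at this
            rw [Function.update_of_ne hij, ← this]
      · push_neg at hagree
        obtain ⟨i, hiX, hne⟩ := hagree
        have hij : i ≠ j := by
          rintro rfl
          rw [Function.update_self, hg] at hne
          exact hne rfl
        rw [hO.1 _ g ⟨i, hiX, hne⟩]
        rw [hO.1 f _ ⟨i, hiX, by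
          rw [Function.update_of_ne hij]
          rw [Function.update_of_ne hij] at hne
          exact hne⟩]
    · rw [if_neg hg]
      apply hO.1 _ g ⟨j, hj', by
        rw [Function.update_self]
        rw [Bool.not_eq_true] at hg
        rw [hg]
        simp⟩

lemma commute_creProd_of_disjoint {O : Module.End ℂ (QState V)} {X : Finset V}
    (hO : SupportedOn O (X : Set V)) {Z : Finset V} (hZ : ∀ j ∈ Z, j ∉ X) :
    Commute O (creProd Z) := by
  unfold creProd
  exact Finset.noncommProd_commute _ _ _ _ fun j hjZ =>
    supportedOn_commute_creOp hO (hZ j hjZ)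

lemma creProd_commute_creProd (Y Z : Finset V) :
    Commute (creProd (V := V) Y) (creProd Z) := by
  unfold creProd
  refine Finset.noncommProd_commute _ _ _ _ fun j hjZ => ?_
  exact (Finset.noncommProd_commute _ _ _ _ fun i _ => creOp_commute j i).symm

lemma sumCreProd_apply (F : Finset (Finset V)) (ψ : QState V) (g : V → Bool) :
    (∑ Z ∈ F, creProd Z) ψ g
      = ∑ Z ∈ F, (if ∀ i ∈ Z, g i = true then ψ (setF g Z) else 0) := by
  rw [LinearMap.sum_apply, Finset.sum_apply]
  exact Finset.sum_congr rfl fun Z _ => creProd_apply' Z ψ g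

lemma vac_apply (g : V → Bool) : vac V g = if g = (fun _ => false) then 1 else 0 := rfl

end AuxOp

end Aux13b
/-- Annihilation of a finite fraction of a generalized quasiparticle tower
`|Q^p⟩ = (Q†)^p |0̄⟩` with `Q† = ∑_{Y ∈ 𝒴} ∏_{j ∈ Y} s†_j`. -/
theorem generalized_annihilation_finite_fraction
    {V : Type*} [Fintype V] [DecidableEq V]
    (G : SimpleGraph V)
    (Δ : ℕ) (hdeg : ∀ v : V, (G.neighborSet v).ncard ≤ Δ)
    (c d₁ d₂ : ℕ) (hc : 1 ≤ c) (hd₁ : 1 ≤ d₁)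
    (Ys : Finset (Finset V))
    (hYne : ∀ Y ∈ Ys, Y.Nonempty)
    (hYcard : ∀ Y ∈ Ys, Y.card = c)
    (hYdiam : ∀ Y ∈ Ys, GDiamLE G Y d₁)
    (hcover : ∀ i : V, ∃ Y ∈ Ys, ∃ j ∈ Y, WithinDist G d₂ i j)
    (Qd : Module.End ℂ (QState V)) (hQd : Qd = ∑ Y ∈ Ys, creProd Y)
    (Rmax : ℕ) (hRmax : 0 < Rmax)
    (h : Finset V → Module.End ℂ (QState V))
    (hsupp : ∀ X, SupportedOn (h X) ↑X)
    (hdiam : ∀ X, ¬(X.Nonempty ∧ GDiamLE G X Rmax) → h X = 0)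
    (hannv : ∀ X, h X (vac V) = 0)
    (hannQ : ∀ X, h X ((Qd ^ 1) (vac V)) = 0)
    (p : ℕ) (E' : ℂ)
    (hp : p * (Δ ^ (2 * (d₁ - 1) + 2 * d₂ + Rmax) + 1) ≤ Fintype.card V)
    (hE : (∑ X : Finset V, h X) ((Qd ^ p) (vac V)) = E' • (Qd ^ p) (vac V)) :
    E' = 0 := by
  classical
  -- Step 1: pick `p` pairwise far-apart vertices.
  obtain ⟨ι, hιS, hsepι⟩ := exists_separated (G := G) hdeg (2 * (d₁ - 1) + 2 * d₂ + Rmax) p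
    Finset.univ (by rw [Finset.card_univ]; exact hp)
  -- Step 2: anchors
  have hcov : ∀ k : Fin p, ∃ Y ∈ Ys, ∃ j ∈ Y, WithinDist G d₂ (ι k) j := fun k => hcover (ι k)
  choose YY hYYmem J hJmem hJd₂ using hcov
  have hsepJ : ∀ k l, k ≠ l → ¬ WithinDist G (2 * (d₁ - 1) + Rmax) (J k) (J l) := by
    intro k l hkl hcon
    apply hsepι k l hkl
    have h1 : WithinDist G (d₂ + ((2 * (d₁ - 1) + Rmax) + d₂)) (ι k) (ι l) :=
      (hJd₂ k).trans' (hcon.trans' (hJd₂ l).symm')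
    exact h1.mono' (by omega)
  have hYdiam' : ∀ k, GDiamLE G (YY k) d₁ := fun k => hYdiam _ (hYYmem k)
  have hanchZ : ∀ Z ∈ Ys, ∀ k l : Fin p, J k ∈ Z → J l ∈ Z → k = l := by
    intro Z hZ k l hk hl
    by_contra hkl
    exact hsepJ k l hkl ((hYdiam Z hZ (J k) hk (J l) hl).mono' (by omega))
  have hYYdisj : ∀ k l : Fin p, k ≠ l → ∀ v, v ∈ YY k → v ∈ YY l → False := by
    intro k l hkl v hvk hvl
    apply hsepJ k l hkl
    exact ((hYdiam' k (J k) (hJmem k) v hvk).trans'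
      (hYdiam' l v hvl (J l) (hJmem l))).mono' (by omega)
  -- Step 3: the target configurations
  set Tq : ℕ → (V → Bool) := fun q v => decide (∃ k : Fin p, (k : ℕ) < q ∧ v ∈ YY k) with hTq
  set nA : (V → Bool) → ℕ :=
    fun g => (Finset.univ.filter (fun k : Fin p => g (J k) = true)).card with hnA
  have hnAT : nA (Tq p) = p := by
    simp only [hnA]
    have : Finset.univ.filter (fun k : Fin p => Tq p (J k) = true) = Finset.univ := by
      apply Finset.filter_true_of_mem
      intro k _
      rw [hTq]
      simp only [decide_eq_true_eq]
      exact ⟨k, k.isLt, hJmem k⟩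
    rw [this, Finset.card_univ, Fintype.card_fin]
  have hnAdrop : ∀ (g : V → Bool) (Z : Finset V), Z ∈ Ys → nA g ≤ nA (setF g Z) + 1 := by
    intro g Z hZ
    simp only [hnA]
    have hsub : Finset.univ.filter (fun k : Fin p => g (J k) = true) ⊆
        (Finset.univ.filter (fun k : Fin p => setF g Z (J k) = true)) ∪
          (Finset.univ.filter (fun k : Fin p => J k ∈ Z)) := by
      intro k hk
      rw [Finset.mem_filter] at hk
      by_cases hkZ : J k ∈ Z
      · exact Finset.mem_union_right _ (by simp [hkZ])
      · refine Finset.mem_union_left _ ?_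
        rw [Finset.mem_filter]
        exact ⟨Finset.mem_univ _, by simp [setF, hkZ, hk.2]⟩
    have hcard1 : (Finset.univ.filter (fun k : Fin p => J k ∈ Z)).card ≤ 1 := by
      rw [Finset.card_le_one]
      intro a ha b hb
      rw [Finset.mem_filter] at ha hb
      exact hanchZ Z hZ a b ha.2 hb.2
    calc (Finset.univ.filter (fun k : Fin p => g (J k) = true)).card
        ≤ ((Finset.univ.filter (fun k : Fin p => setF g Z (J k) = true)) ∪
            (Finset.univ.filter (fun k : Fin p => J k ∈ Z))).card := Finset.card_le_card hsub
      _ ≤ _ + _ := Finset.card_union_le _ _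
      _ ≤ (Finset.univ.filter (fun k : Fin p => setF g Z (J k) = true)).card + 1 := by omega
  -- Step 4: positivity of the tower state on `Tq q`.
  have hpos : ∀ q : ℕ, (∀ g, ((Qd ^ q) (vac V) g).im = 0 ∧ 0 ≤ ((Qd ^ q) (vac V) g).re) ∧
      (q ≤ p → 1 ≤ ((Qd ^ q) (vac V) (Tq q)).re) := by
    intro q
    induction q with
    | zero =>
      constructor
      · intro g
        rw [pow_zero, Module.End.one_apply, vac_apply]
        by_cases hg : g = (fun _ => false) <;> simp [hg]
      · intro _
        rw [pow_zero, Module.End.one_apply]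
        have h0 : Tq 0 = (fun _ => false) := by
          funext v; rw [hTq]; simp
        rw [h0, vac_apply, if_pos rfl]
        norm_num
    | succ q ih =>
      have hstep : ∀ g, (Qd ^ (q + 1)) (vac V) g =
          ∑ Z ∈ Ys, (if ∀ i ∈ Z, g i = true then (Qd ^ q) (vac V) (setF g Z) else 0) := by
        intro g
        rw [pow_succ', Module.End.mul_apply, hQd, sumCreProd_apply]
      constructor
      · intro g
        rw [hstep]
        constructor
        · rw [Complex.im_sum]
          refine Finset.sum_eq_zero fun Z _ => ?_
          split
          · exact (ih.1 _).1
          · simp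
        · rw [Complex.re_sum]
          refine Finset.sum_nonneg fun Z _ => ?_
          split
          · exact (ih.1 _).2
          · simp
      · intro hqp
        rw [hstep, Complex.re_sum]
        set kq : Fin p := ⟨q, by omega⟩ with hkq
        have hterm : 1 ≤ ((if ∀ i ∈ YY kq, Tq (q + 1) i = true then
            (Qd ^ q) (vac V) (setF (Tq (q + 1)) (YY kq)) else 0)).re := by
          rw [if_pos]
          · have hset : setF (Tq (q + 1)) (YY kq) = Tq q := by
              funext v
              by_cases hv : v ∈ YY kq
              · rw [hTq]
                simp only [setF, hv, if_true]
                symm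
                rw [decide_eq_false_iff_not]
                rintro ⟨k, hkq', hvk⟩
                have hkne : k ≠ kq := by
                  intro hkk
                  rw [hkk, hkq] at hkq'
                  exact absurd hkq' (by simp)
                exact hYYdisj k kq hkne v hvk hv
              · rw [hTq]
                simp only [setF, hv, if_false]
                have : (∃ k : Fin p, (k : ℕ) < q + 1 ∧ v ∈ YY k) ↔
                    (∃ k : Fin p, (k : ℕ) < q ∧ v ∈ YY k) := by
                  constructor
                  · rintro ⟨k, hk1, hk2⟩
                    refine ⟨k, ?_, hk2⟩
                    rcases Nat.lt_succ_iff_lt_or_eq.mp hk1 with h' | h'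
                    · exact h'
                    · exfalso
                      apply hv
                      have : k = kq := by rw [hkq]; exact Fin.ext h'
                      rwa [this] at hk2
                  · rintro ⟨k, hk1, hk2⟩
                    exact ⟨k, by omega, hk2⟩
                simp only [this]
            rw [hset]
            exact ih.2 (by omega)
          · intro i hi
            rw [hTq]
            simp only [decide_eq_true_eq]
            exact ⟨kq, by rw [hkq]; simpa using Nat.lt_succ_self q, hi⟩
        refine le_trans hterm (Finset.single_le_sum (f := fun Z =>
          ((if ∀ i ∈ Z, Tq (q + 1) i = true then
            (Qd ^ q) (vac V) (setF (Tq (q + 1)) Z) else 0)).re) ?_ (hYYmem kq))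
        intro Z _
        split
        · exact (ih.1 _).2
        · simp
  -- Step 5: every local term kills the tower state at `Tq p`.
  have hXzero : ∀ X : Finset V, (h X) ((Qd ^ p) (vac V)) (Tq p) = 0 := by
    intro X
    by_cases hx0 : h X = 0
    · rw [hx0]; simp
    have hXprop : X.Nonempty ∧ GDiamLE G X Rmax := by
      by_contra hcn; exact hx0 (hdiam X hcn)
    obtain ⟨hXne, hXdiam⟩ := hXprop
    have hclose : ∀ k l : Fin p, (∃ x ∈ X, WithinDist G (d₁ - 1) x (J k)) →
        (∃ x ∈ X, WithinDist G (d₁ - 1) x (J l)) → k = l := by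
      rintro k l ⟨x, hx, hxk⟩ ⟨x', hx', hxl⟩
      by_contra hkl
      apply hsepJ k l hkl
      exact (hxk.symm'.trans' ((hXdiam x hx x' hx').trans' hxl)).mono' (by omega)
    set near := Ys.filter (fun Z => (Z ∩ X).Nonempty) with hnear
    set far := Ys.filter (fun Z => ¬ (Z ∩ X).Nonempty) with hfar
    set Qn : Module.End ℂ (QState V) := ∑ Z ∈ near, creProd Z with hQn
    set Qf : Module.End ℂ (QState V) := ∑ Z ∈ far, creProd Z with hQf
    have hsplit : Qd = Qn + Qf := by
      rw [hQd, hQn, hQf, hnear, hfar]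
      exact (Finset.sum_filter_add_sum_filter_not Ys _ _).symm
    have hcomm_nf : Commute Qn Qf := by
      rw [hQn, hQf]
      refine Commute.sum_left _ _ _ fun Z _ => ?_
      exact Commute.sum_right _ _ _ fun W _ => creProd_commute_creProd Z W
    have hcomm_hf : Commute (h X) Qf := by
      rw [hQf]
      refine Commute.sum_right _ _ _ fun Z hZ => ?_
      apply commute_creProd_of_disjoint (hsupp X)
      intro j hjZ hjX
      rw [hfar, Finset.mem_filter] at hZ
      exact hZ.2 ⟨j, Finset.mem_inter.mpr ⟨hjZ, hjX⟩⟩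
    -- support of Qn^m vac is near X
    have hSQ : ∀ m : ℕ, ∀ S : V → Bool, (Qn ^ m) (vac V) S ≠ 0 →
        ∀ i, S i = true → ∃ x ∈ X, WithinDist G (d₁ - 1) x i := by
      intro m
      induction m with
      | zero =>
        intro S hS i hi
        rw [pow_zero, Module.End.one_apply, vac_apply] at hS
        have hSf : S = (fun _ => false) := by
          by_contra hne
          rw [if_neg hne] at hS
          exact hS rfl
        rw [hSf] at hi
        simp at hi
      | succ m ih =>
        intro S hS i hi
        rw [pow_succ', Module.End.mul_apply, hQn, sumCreProd_apply] at hS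
        obtain ⟨Z, hZnear, hZne⟩ := Finset.exists_ne_zero_of_sum_ne_zero hS
        by_cases hcond : ∀ i' ∈ Z, S i' = true
        · rw [if_pos hcond] at hZne
          rw [hnear, Finset.mem_filter] at hZnear
          obtain ⟨hZYs, hZX⟩ := hZnear
          by_cases hiZ : i ∈ Z
          · obtain ⟨x, hxZX⟩ := hZX
            rw [Finset.mem_inter] at hxZX
            exact ⟨x, hxZX.2, hYdiam Z hZYs x hxZX.1 i hiZ⟩
          · exact ih (setF S Z) hZne i (by simp [setF, hiZ, hi])
        · rw [if_neg hcond] at hZne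
          exact absurd rfl hZne
    -- vanishing on configurations with ≥ 2 anchors
    have hvan : ∀ m : ℕ, ∀ w, 2 ≤ nA w → (h X) ((Qn ^ m) (vac V)) w = 0 := by
      intro m w hw
      rw [apply_eq_sum]
      refine Finset.sum_eq_zero fun S _ => ?_
      by_cases hterm : (h X) (basisVec S) w = 0
      · rw [hterm, mul_zero]
      by_cases hSz : (Qn ^ m) (vac V) S = 0
      · rw [hSz, zero_mul]
      exfalso
      have hoff : ∀ i, i ∉ X → S i = w i := by
        intro i hiX
        by_contra hne
        exact hterm ((hsupp X).1 S w ⟨i, by simpa using hiX, hne⟩)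
      simp only [hnA] at hw
      obtain ⟨a, ha, b, hb, hab⟩ := Finset.one_lt_card.mp hw
      rw [Finset.mem_filter] at ha hb
      have hcl : ∀ k : Fin p, w (J k) = true → ∃ x ∈ X, WithinDist G (d₁ - 1) x (J k) := by
        intro k hk
        by_cases hkX : J k ∈ X
        · exact ⟨J k, hkX, withinDist_refl _ _⟩
        · exact hSQ m S hSz (J k) (by rw [hoff _ hkX]; exact hk)
      exact hab (hclose a b (hcl a ha.2) (hcl b hb.2))
    -- the far part cannot create two anchors' worth of weight
    have hL : ∀ q : ℕ, ∀ φ : QState V, (∀ w, 2 ≤ nA w → φ w = 0) →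
        ∀ g, q + 2 ≤ nA g → (Qf ^ q) φ g = 0 := by
      intro q
      induction q with
      | zero =>
        intro φ hφ g hg
        rw [pow_zero, Module.End.one_apply]
        exact hφ g (by omega)
      | succ q ih =>
        intro φ hφ g hg
        rw [pow_succ', Module.End.mul_apply, hQf, sumCreProd_apply]
        refine Finset.sum_eq_zero fun Z hZ => ?_
        split
        · refine ih φ hφ _ ?_
          rw [hfar, Finset.mem_filter] at hZ
          have h1 := hnAdrop g Z hZ.1
          omega
        · rfl
    -- binomial expansion
    have hexp : (h X) ((Qd ^ p) (vac V)) =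
        ∑ m ∈ Finset.range (p + 1),
          (p.choose m) • ((Qf ^ (p - m)) ((h X) ((Qn ^ m) (vac V)))) := by
      rw [hsplit, Commute.add_pow hcomm_nf, LinearMap.sum_apply, map_sum]
      refine Finset.sum_congr rfl fun m _ => ?_
      have h1 : (Qn ^ m * Qf ^ (p - m) * (p.choose m : Module.End ℂ (QState V))) (vac V)
          = (p.choose m) • ((Qn ^ m) ((Qf ^ (p - m)) (vac V))) := by
        rw [Module.End.mul_apply, Module.End.mul_apply, Module.End.natCast_apply,
          map_nsmul, map_nsmul]
      rw [h1, map_nsmul]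
      congr 1
      have hop : (h X) * (Qn ^ m * Qf ^ (p - m)) = (Qf ^ (p - m)) * ((h X) * Qn ^ m) := by
        calc (h X) * (Qn ^ m * Qf ^ (p - m))
            = (h X) * (Qf ^ (p - m) * Qn ^ m) := by rw [(hcomm_nf.pow_pow m (p - m)).eq]
          _ = ((h X) * Qf ^ (p - m)) * Qn ^ m := by rw [mul_assoc]
          _ = (Qf ^ (p - m) * (h X)) * Qn ^ m := by rw [(hcomm_hf.pow_right (p - m)).eq]
          _ = (Qf ^ (p - m)) * ((h X) * Qn ^ m) := by rw [mul_assoc]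
      calc (h X) ((Qn ^ m) ((Qf ^ (p - m)) (vac V)))
          = ((h X) * (Qn ^ m * Qf ^ (p - m))) (vac V) := by
            rw [Module.End.mul_apply, Module.End.mul_apply]
        _ = ((Qf ^ (p - m)) * ((h X) * Qn ^ m)) (vac V) := by rw [hop]
        _ = (Qf ^ (p - m)) ((h X) ((Qn ^ m) (vac V))) := by
            rw [Module.End.mul_apply, Module.End.mul_apply]
    rw [hexp, Finset.sum_apply]
    refine Finset.sum_eq_zero fun m hm => ?_
    rw [Pi.smul_apply]
    rcases Nat.lt_or_ge m 2 with hm2 | hm2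
    · interval_cases m
      · rw [pow_zero, Module.End.one_apply, hannv X]
        simp
      · rw [pow_one]
        have hQnvac : (h X) (Qn (vac V)) = 0 := by
          have hvd : Qn (vac V) = Qd (vac V) - Qf (vac V) := by
            rw [hsplit, LinearMap.add_apply]; ring
          have h2 : (h X) (Qd (vac V)) = 0 := by
            have := hannQ X; rwa [pow_one] at this
          have h3 : (h X) (Qf (vac V)) = Qf ((h X) (vac V)) := by
            calc (h X) (Qf (vac V)) = ((h X) * Qf) (vac V) := by rw [Module.End.mul_apply]
              _ = (Qf * (h X)) (vac V) := by rw [hcomm_hf.eq]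
              _ = Qf ((h X) (vac V)) := by rw [Module.End.mul_apply]
          rw [hvd, map_sub, h2, h3, hannv X]
          simp
        rw [hQnvac]
        simp
    · have hval : ((Qf ^ (p - m)) ((h X) ((Qn ^ m) (vac V)))) (Tq p) = 0 := by
        apply hL (p - m) _ (hvan m)
        rw [hnAT]
        have hmp : m ≤ p := by have := Finset.mem_range.mp hm; omega
        omega
      rw [hval]
      simp
  -- Step 6: conclude
  have hψT : ((Qd ^ p) (vac V)) (Tq p) ≠ 0 := by
    intro hcz
    have h1 := (hpos p).2 le_rfl
    rw [hcz] at h1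
    norm_num at h1
  have hHT : (∑ X : Finset V, h X) ((Qd ^ p) (vac V)) (Tq p) = 0 := by
    rw [LinearMap.sum_apply, Finset.sum_apply]
    exact Finset.sum_eq_zero fun X _ => hXzero X
  rw [hE, Pi.smul_apply, smul_eq_mul] at hHT
  rcases mul_eq_zero.mp hHT with h' | h'
  · exact h'
  · exact absurd h' hψT
end

section
/- Let V be a finite set of N qubit sites, let k ≥ 2 and T_max ≥ 1 be integers, and let H = ∑_{t∈T} h_t be a finite sum of operators, where each h_t is supported on a subset X_t ⊆ V with |X_t| ≤ k, and every site of V belongs to at most T_max of the sets X_t. Let G be the graph on V with an edge between distinct sites i and j whenever i, j ∈ X_t for some t ∈ T, and assume G is connected. If N > 2k·(((k−1)·T_max)^8 + 1) and for every 0 ≤ p ≤ N there is E_p ∈ ℂ with H |W^p⟩ = E_p |W^p⟩, then there exist Ω, ω ∈ ℂ with E_p = Ω + ω·p for all 0 ≤ p ≤ N. -/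
open scoped BigOperators
set_option linter.unusedSectionVars false

/-- The graph induced by a family of interaction supports: distinct sites `i` and `j` are
adjacent whenever some interaction term involves both. -/
def inducedGraph {V : Type*} {n : ℕ} (X : Fin n → Finset V) : SimpleGraph V where
  Adj i j := i ≠ j ∧ ∃ t, i ∈ X t ∧ j ∈ X t
  symm := by
    constructor
    intro i j hij
    exact ⟨hij.1.symm, hij.2.imp fun t ht => ⟨ht.2, ht.1⟩⟩
  loopless := by
    constructor
    intro i hi
    exact hi.1 rfl

noncomputable section
namespace DickeAux

variable {V : Type*} [Fintype V] [DecidableEq V]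

/-- The weight (number of `true` sites) of a configuration. -/
def wt (g : V → Bool) : ℕ := (Finset.univ.filter (fun i => g i = true)).card

lemma wt_le_card (g : V → Bool) : wt g ≤ Fintype.card V :=
  Finset.card_filter_le _ _

lemma wt_update_true {g : V → Bool} {i : V} (h : g i = false) :
    wt (Function.update g i true) = wt g + 1 := by
  have hset : (Finset.univ.filter fun j => Function.update g i true j = true)
      = insert i (Finset.univ.filter fun j => g j = true) := by
    ext j
    by_cases hj : j = i
    · subst hj; simp [h]
    · simp [Function.update_of_ne hj, hj]
  rw [wt, hset, Finset.card_insert_of_notMem (by simp [h])]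
  rfl

lemma wt_update_false {g : V → Bool} {i : V} (h : g i = true) :
    wt (Function.update g i false) + 1 = wt g := by
  have hset : (Finset.univ.filter fun j => Function.update g i false j = true)
      = (Finset.univ.filter fun j => g j = true).erase i := by
    ext j
    by_cases hj : j = i
    · subst hj; simp
    · simp [Function.update_of_ne hj, hj]
  have hmem : i ∈ Finset.univ.filter fun j => g j = true := by simp [h]
  have hpos : 0 < (Finset.univ.filter fun j => g j = true).card :=
    Finset.card_pos.mpr ⟨i, hmem⟩
  rw [wt, hset, Finset.card_erase_of_mem hmem, wt]
  omega

lemma wt_eq_zero {g : V → Bool} : wt g = 0 ↔ g = fun _ => false := by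
  constructor
  · intro hg
    funext j
    by_contra hj
    have hj' : g j = true := by
      cases hgj : g j
      · exact absurd hgj hj
      · rfl
    have hmem : j ∈ Finset.univ.filter fun i => g i = true := by simp [hj']
    rw [wt, Finset.card_eq_zero] at hg
    simp [hg] at hmem
  · rintro rfl; simp [wt]

lemma basis_expansion (ψ : QState V) : ψ = ∑ f : V → Bool, ψ f • basisVec f := by
  funext g
  rw [Finset.sum_apply]
  rw [Finset.sum_eq_single g]
  · simp [basisVec]
  · intro f _ hfg
    simp [basisVec, Ne.symm hfg]
  · intro hg; exact absurd (Finset.mem_univ g) hg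

lemma wstate_eq : ∀ (p : ℕ) (g : V → Bool),
    WState V p g = if wt g = p then (p.factorial : ℂ) else 0 := by
  intro p
  induction p with
  | zero =>
    intro g
    show ((Sdag V) ^ 0) (vac V) g = _
    rw [pow_zero, Module.End.one_apply]
    rw [vac, basisVec]
    by_cases hg : wt g = 0
    · rw [if_pos hg, if_pos (wt_eq_zero.mp hg)]
      simp
    · rw [if_neg hg, if_neg (fun hh => hg (wt_eq_zero.mpr hh))]
  | succ p ih =>
    intro g
    have hstep : WState V (p+1) g
        = ∑ j : V, (if g j = true then WState V p (Function.update g j false) else 0) := by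
      show ((Sdag V) ^ (p+1)) (vac V) g = _
      rw [pow_succ', Module.End.mul_apply]
      show (Sdag V) (WState V p) g = _
      rw [Sdag, LinearMap.sum_apply, Finset.sum_apply]
      rfl
    rw [hstep]
    have hterm : ∀ j : V, (if g j = true then WState V p (Function.update g j false) else 0)
        = if g j = true then (if wt g = p + 1 then (p.factorial : ℂ) else 0) else 0 := by
      intro j
      by_cases hj : g j = true
      · rw [if_pos hj, if_pos hj, ih]
        have := wt_update_false hj
        by_cases hw : wt g = p + 1
        · rw [if_pos (by omega), if_pos hw]
        · rw [if_neg (by omega), if_neg hw]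
      · rw [if_neg hj, if_neg hj]
    rw [Finset.sum_congr rfl (fun j _ => hterm j), ← Finset.sum_filter, Finset.sum_const]
    by_cases hw : wt g = p + 1
    · rw [if_pos hw]
      show (wt g) • _ = _
      rw [if_pos hw, hw, Nat.factorial_succ]
      push_cast
      ring
    · rw [if_neg hw, if_neg hw, smul_zero]


def cfun (O : Module.End ℂ (QState V)) (X : Finset V) (g : V → Bool) : ℂ :=
  ∑ f ∈ Finset.univ.filter
      (fun f : V → Bool => (∀ j, j ∉ X → f j = g j) ∧ wt f = wt g),
    O (basisVec f) g

lemma cfun_spec {O : Module.End ℂ (QState V)} {X : Finset V} (hO : SupportedOn O ↑X)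
    (g : V → Bool) :
    O (WState V (wt g)) g = ((wt g).factorial : ℂ) * cfun O X g := by
  conv_lhs => rw [basis_expansion (WState V (wt g))]
  rw [map_sum, Finset.sum_apply]
  simp only [map_smul, Pi.smul_apply, smul_eq_mul, wstate_eq]
  have hterm : ∀ f : V → Bool,
      (if wt f = wt g then ((wt g).factorial : ℂ) else 0) * O (basisVec f) g
      = ((wt g).factorial : ℂ) * (if wt f = wt g then O (basisVec f) g else 0) := by
    intro f; by_cases hf : wt f = wt g <;> simp [hf]
  rw [Finset.sum_congr rfl (fun f _ => hterm f), ← Finset.mul_sum]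
  congr 1
  rw [← Finset.sum_filter, cfun]
  refine (Finset.sum_subset ?_ ?_).symm
  · intro f hf
    simp only [Finset.mem_filter, Finset.mem_univ, true_and] at hf ⊢
    exact hf.2
  · intro f hf hnf
    simp only [Finset.mem_filter, Finset.mem_univ, true_and] at hf hnf
    have : ¬ (∀ j, j ∉ X → f j = g j) := fun hall => hnf ⟨hall, hf⟩
    push_neg at this
    obtain ⟨j, hj, hne⟩ := this
    exact hO.1 f g ⟨j, by simpa using hj, hne⟩

lemma wt_split (X : Finset V) (f : V → Bool) :
    wt f = (X.filter fun j => f j = true).card + (Xᶜ.filter fun j => f j = true).card := by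
  rw [wt, ← Finset.union_compl X, Finset.filter_union,
    Finset.card_union_of_disjoint
      (Finset.disjoint_filter_filter disjoint_compl_right)]

lemma cfun_congr {O : Module.End ℂ (QState V)} {X : Finset V} (hO : SupportedOn O ↑X)
    {g g' : V → Bool} (hgg : ∀ j ∈ X, g j = g' j) :
    cfun O X g = cfun O X g' := by
  unfold cfun
  refine Finset.sum_nbij' (i := fun f => fun j => if j ∈ X then f j else g' j)
    (j := fun f => fun j => if j ∈ X then f j else g j) ?_ ?_ ?_ ?_ ?_
  · intro f hf
    simp only [Finset.mem_filter, Finset.mem_univ, true_and] at hf ⊢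
    obtain ⟨hoff, hwt⟩ := hf
    constructor
    · intro j hj; rw [if_neg hj]
    · -- weight computation
      have h1 : (X.filter fun j => f j = true)
          = (X.filter fun j => (if j ∈ X then f j else g' j) = true) :=
        (Finset.filter_congr (fun j hj => by rw [if_pos hj])).symm
      have h2 : (Xᶜ.filter fun j => (if j ∈ X then f j else g' j) = true)
          = (Xᶜ.filter fun j => g' j = true) :=
        Finset.filter_congr (fun j hj => by rw [if_neg (Finset.mem_compl.mp hj)])
      have h3 : (Xᶜ.filter fun j => f j = true) = (Xᶜ.filter fun j => g j = true) :=
        Finset.filter_congr (fun j hj => by rw [hoff j (Finset.mem_compl.mp hj)])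
      have h4 : (X.filter fun j => g j = true) = (X.filter fun j => g' j = true) :=
        Finset.filter_congr (fun j hj => by rw [hgg j hj])
      have e1 := wt_split X f
      have e2 := wt_split X g
      have e3 := wt_split X g'
      have e4 := wt_split X (fun j => if j ∈ X then f j else g' j)
      rw [← h1, h2] at e4
      rw [h3] at e1
      rw [h4] at e2
      omega
  · intro f hf
    simp only [Finset.mem_filter, Finset.mem_univ, true_and] at hf ⊢
    obtain ⟨hoff, hwt⟩ := hf
    constructor
    · intro j hj; rw [if_neg hj]
    · have h1 : (X.filter fun j => f j = true)
          = (X.filter fun j => (if j ∈ X then f j else g j) = true) :=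
        (Finset.filter_congr (fun j hj => by rw [if_pos hj])).symm
      have h2 : (Xᶜ.filter fun j => (if j ∈ X then f j else g j) = true)
          = (Xᶜ.filter fun j => g j = true) :=
        Finset.filter_congr (fun j hj => by rw [if_neg (Finset.mem_compl.mp hj)])
      have h3 : (Xᶜ.filter fun j => f j = true) = (Xᶜ.filter fun j => g' j = true) :=
        Finset.filter_congr (fun j hj => by rw [hoff j (Finset.mem_compl.mp hj)])
      have h4 : (X.filter fun j => g j = true) = (X.filter fun j => g' j = true) :=
        Finset.filter_congr (fun j hj => by rw [hgg j hj])
      have e1 := wt_split X f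
      have e2 := wt_split X g
      have e3 := wt_split X g'
      have e4 := wt_split X (fun j => if j ∈ X then f j else g j)
      rw [← h1, h2] at e4
      rw [h3] at e1
      rw [h4] at e2
      omega
  · intro f hf
    simp only [Finset.mem_filter, Finset.mem_univ, true_and] at hf
    funext j
    by_cases hj : j ∈ X
    · simp [hj]
    · simp [hj, hf.1 j hj]
  · intro f hf
    simp only [Finset.mem_filter, Finset.mem_univ, true_and] at hf
    funext j
    by_cases hj : j ∈ X
    · simp [hj]
    · simp [hj, hf.1 j hj]
  · intro f hf
    simp only [Finset.mem_filter, Finset.mem_univ, true_and] at hf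
    refine hO.2 f _ g g' ?_ hgg hf.1 ?_
    · intro j hj; rw [if_pos (by simpa using hj)]
    · intro j hj; rw [if_neg (by simpa using hj)]

end DickeAux
end

/-- Equal spacing of the Dicke tower for "low-density" Hamiltonians:
each term is supported on at most k sites and each site belongs to at most T_max terms. -/
theorem low_density_equal_spacing
    {V : Type*} [Fintype V] [DecidableEq V]
    (k Tmax : ℕ) (hk : 2 ≤ k) (hT : 1 ≤ Tmax)
    (n : ℕ) (h : Fin n → Module.End ℂ (QState V)) (X : Fin n → Finset V)
    (hsupp : ∀ t, SupportedOn (h t) ↑(X t))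
    (hcard : ∀ t, (X t).card ≤ k)
    (hdensity : ∀ i : V, (Finset.univ.filter (fun t => i ∈ X t)).card ≤ Tmax)
    (hconn : (inducedGraph X).Connected)
    (hbig : 2 * k * (((k - 1) * Tmax) ^ 8 + 1) < Fintype.card V)
    (E : ℕ → ℂ)
    (hE : ∀ p ≤ Fintype.card V, (∑ t, h t) (WState V p) = E p • WState V p) :
    ∃ Ω ω : ℂ, ∀ p ≤ Fintype.card V, E p = Ω + ω * p := by
  classical
  open DickeAux in
  set N := Fintype.card V with hNdef
  have hNpos : 0 < N := lt_of_le_of_lt (Nat.zero_le _) hbig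
  obtain ⟨i⟩ : Nonempty V := Fintype.card_pos_iff.mp hNpos
  set Y : Finset V := (Finset.univ.filter (fun t => i ∈ X t)).biUnion X with hYdef
  set Z : Finset V := insert i Y with hZdef
  have hYcard : Y.card ≤ Tmax * k := by
    calc Y.card ≤ ∑ t ∈ Finset.univ.filter (fun t => i ∈ X t), (X t).card :=
          Finset.card_biUnion_le
      _ ≤ ∑ _t ∈ Finset.univ.filter (fun t => i ∈ X t), k :=
          Finset.sum_le_sum (fun t _ => hcard t)
      _ = (Finset.univ.filter (fun t => i ∈ X t)).card * k := by
          rw [Finset.sum_const, smul_eq_mul]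
      _ ≤ Tmax * k := Nat.mul_le_mul_right k (hdensity i)
  have hZcard : Z.card ≤ Tmax * k + 1 :=
    le_trans (Finset.card_insert_le _ _) (by omega)
  have hZ1 : 1 ≤ Z.card := Finset.card_pos.mpr ⟨i, Finset.mem_insert_self i Y⟩
  -- arithmetic: 2 * Z.card ≤ N
  have h2m : 2 * Z.card ≤ N := by
    have h8 : (k - 1) * Tmax ≤ ((k - 1) * Tmax) ^ 8 := Nat.le_self_pow (by norm_num) _
    have hT1 : Tmax ≤ (k - 1) * Tmax := Nat.le_mul_of_pos_left Tmax (by omega)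
    have hTe : Tmax ≤ ((k - 1) * Tmax) ^ 8 := le_trans hT1 h8
    have hTk : Tmax * k ≤ ((k - 1) * Tmax) ^ 8 * k := Nat.mul_le_mul_right k hTe
    have key2 : Z.card ≤ ((k - 1) * Tmax) ^ 8 * k + k :=
      calc Z.card ≤ Tmax * k + 1 := hZcard
        _ ≤ ((k - 1) * Tmax) ^ 8 * k + 1 := by omega
        _ ≤ ((k - 1) * Tmax) ^ 8 * k + k := by omega
    have e : 2 * (((k - 1) * Tmax) ^ 8 * k + k) = 2 * k * (((k - 1) * Tmax) ^ 8 + 1) := by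
      ring
    have : 2 * Z.card ≤ 2 * (((k - 1) * Tmax) ^ 8 * k + k) := by omega
    omega
  -- key identity
  have hkey : ∀ g : V → Bool, E (wt g) = ∑ t, cfun (h t) (X t) g := by
    intro g
    have hwt : wt g ≤ N := wt_le_card g
    have hE' := hE (wt g) hwt
    have heq := congrFun hE' g
    have hLHS : (∑ t, h t) (WState V (wt g)) g
        = ((wt g).factorial : ℂ) * ∑ t, cfun (h t) (X t) g := by
      rw [LinearMap.sum_apply, Finset.sum_apply, Finset.mul_sum]
      exact Finset.sum_congr rfl (fun t _ => cfun_spec (hsupp t) g)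
    have hRHS : (E (wt g) • WState V (wt g)) g
        = ((wt g).factorial : ℂ) * E (wt g) := by
      rw [Pi.smul_apply, smul_eq_mul, wstate_eq, if_pos rfl]
      ring
    have hfac : ((wt g).factorial : ℂ) ≠ 0 :=
      Nat.cast_ne_zero.mpr (Nat.factorial_ne_zero _)
    have hfinal : ((wt g).factorial : ℂ) * ∑ t, cfun (h t) (X t) g
        = ((wt g).factorial : ℂ) * E (wt g) := by
      rw [← hLHS, heq, hRHS]
    exact (mul_left_cancel₀ hfac hfinal).symm
  -- difference depends only on restriction to Y
  have hdiff : ∀ g g' : V → Bool, g i = false → g' i = false →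
      (∀ j ∈ Y, g j = g' j) →
      E (wt g + 1) - E (wt g) = E (wt g' + 1) - E (wt g') := by
    intro g g' hgi hg'i hagree
    have e1 : wt (Function.update g i true) = wt g + 1 := wt_update_true hgi
    have e2 : wt (Function.update g' i true) = wt g' + 1 := wt_update_true hg'i
    rw [← e1, ← e2, hkey, hkey, hkey, hkey, ← Finset.sum_sub_distrib,
      ← Finset.sum_sub_distrib]
    refine Finset.sum_congr rfl (fun t _ => ?_)
    by_cases ht : i ∈ X t
    · have hXY : X t ⊆ Y := fun j hj =>
        Finset.mem_biUnion.mpr ⟨t, Finset.mem_filter.mpr ⟨Finset.mem_univ t, ht⟩, hj⟩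
      have c1 : cfun (h t) (X t) g = cfun (h t) (X t) g' :=
        cfun_congr (hsupp t) (fun j hj => hagree j (hXY hj))
      have c2 : cfun (h t) (X t) (Function.update g i true)
          = cfun (h t) (X t) (Function.update g' i true) := by
        refine cfun_congr (hsupp t) (fun j hj => ?_)
        by_cases hji : j = i
        · subst hji; simp
        · rw [Function.update_of_ne hji, Function.update_of_ne hji]
          exact hagree j (hXY hj)
      rw [c1, c2]
    · have c1 : cfun (h t) (X t) (Function.update g i true) = cfun (h t) (X t) g :=
        cfun_congr (hsupp t) (fun j hj =>
          Function.update_of_ne (fun hji => ht (by rwa [hji] at hj)) _ _)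
      have c2 : cfun (h t) (X t) (Function.update g' i true) = cfun (h t) (X t) g' :=
        cfun_congr (hsupp t) (fun j hj =>
          Function.update_of_ne (fun hji => ht (by rwa [hji] at hj)) _ _)
      rw [c1, c2, sub_self, sub_self]
  -- existence of configurations, pattern A (all false on Z)
  have exA : ∀ p : ℕ, p + Z.card ≤ N →
      ∃ g : V → Bool, wt g = p ∧ g i = false ∧ ∀ j ∈ Y, g j = false := by
    intro p hp
    have hcard' : p ≤ Zᶜ.card := by rw [Finset.card_compl]; omega
    obtain ⟨A, hAsub, hAcard⟩ := Finset.exists_subset_card_eq hcard'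
    refine ⟨fun j => decide (j ∈ A), ?_, ?_, ?_⟩
    · rw [wt, show (Finset.univ.filter fun j => decide (j ∈ A) = true) = A from by
        ext j; simp]
      exact hAcard
    · have : i ∉ A := fun hi =>
        (Finset.mem_compl.mp (hAsub hi)) (Finset.mem_insert_self i Y)
      simp [this]
    · intro j hj
      have : j ∉ A := fun hjA =>
        (Finset.mem_compl.mp (hAsub hjA)) (Finset.mem_insert_of_mem hj)
      simp [this]
  -- pattern B (all true on Z except i)
  have exB : ∀ p : ℕ, Z.card - 1 ≤ p → p + 1 ≤ N →
      ∃ g : V → Bool, wt g = p ∧ g i = false ∧ ∀ j ∈ Y, g j = decide (j ≠ i) := by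
    intro p hp1 hp2
    have hcard' : p - (Z.card - 1) ≤ Zᶜ.card := by rw [Finset.card_compl]; omega
    obtain ⟨B, hBsub, hBcard⟩ := Finset.exists_subset_card_eq hcard'
    have hdis : Disjoint (Z.erase i) B := by
      rw [Finset.disjoint_left]
      intro j hj hjB
      exact (Finset.mem_compl.mp (hBsub hjB)) (Finset.erase_subset i Z hj)
    refine ⟨fun j => decide (j ∈ Z.erase i ∪ B), ?_, ?_, ?_⟩
    · rw [wt, show (Finset.univ.filter fun j => decide (j ∈ Z.erase i ∪ B) = true)
          = Z.erase i ∪ B from by ext j; simp]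
      rw [Finset.card_union_of_disjoint hdis,
        Finset.card_erase_of_mem (Finset.mem_insert_self i Y), hBcard]
      simp only [← hZdef]
      omega
    · have h1 : i ∉ Z.erase i := Finset.notMem_erase i Z
      have h2 : i ∉ B := fun hi =>
        (Finset.mem_compl.mp (hBsub hi)) (Finset.mem_insert_self i Y)
      simp [h1, h2]
    · intro j hj
      have hjZ : j ∈ Z := Finset.mem_insert_of_mem hj
      have hjB : j ∉ B := fun hjB => (Finset.mem_compl.mp (hBsub hjB)) hjZ
      by_cases hji : j = i
      · subst hji
        simp [Finset.notMem_erase, hjB]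
      · simp [Finset.mem_erase, hji, hjZ]
  -- the spacing is constant
  have hD : ∀ p : ℕ, p + 1 ≤ N → E (p + 1) - E p = E 1 - E 0 := by
    have DA : ∀ p : ℕ, p + Z.card ≤ N → E (p + 1) - E p = E 1 - E 0 := by
      intro p hp
      obtain ⟨g, hwg, hgi, hgY⟩ := exA p hp
      obtain ⟨g0, hwg0, hg0i, hg0Y⟩ := exA 0 (by omega)
      have := hdiff g g0 hgi hg0i (fun j hj => by rw [hgY j hj, hg0Y j hj])
      rw [hwg, hwg0] at this
      simpa using this
    have DB : ∀ p q : ℕ, Z.card - 1 ≤ p → p + 1 ≤ N → Z.card - 1 ≤ q → q + 1 ≤ N →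
        E (p + 1) - E p = E (q + 1) - E q := by
      intro p q hp1 hp2 hq1 hq2
      obtain ⟨g, hwg, hgi, hgY⟩ := exB p hp1 hp2
      obtain ⟨g', hwg', hg'i, hg'Y⟩ := exB q hq1 hq2
      have := hdiff g g' hgi hg'i (fun j hj => by rw [hgY j hj, hg'Y j hj])
      rw [hwg, hwg'] at this
      exact this
    intro p hp
    by_cases hcase : p + Z.card ≤ N
    · exact DA p hcase
    · have h1 := DB p (Z.card - 1) (by omega) hp (le_refl _) (by omega)
      have h2 := DA (Z.card - 1) (by omega)
      rw [h1, h2]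
  -- conclude
  refine ⟨E 0, E 1 - E 0, ?_⟩
  intro p
  induction p with
  | zero => intro _; simp
  | succ q ih =>
    intro hp
    have h1 := hD q hp
    have h2 := ih (by omega)
    push_cast
    linear_combination h1 + h2
end
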